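/- In the two-player binary-action example game, each player i's interim payoff V_i(a_i, t_i; s_j) satisfies the single crossing condition in (a_i, t_i) whenever the opponent j adopts a monotone strategy s_j. -/
import Mathlib


/-!
Statement 12 (Claim 1, part 1): in the two-player binary-action example game, each player's
interim payoff satisfies the single crossing condition in (own action, own type) whenever the
opponent adopts a monotone strategy.
-/

open MeasureTheory Filter Metric

namespace MonotonePerfection

noncomputable section

/-- The single crossing condition for  in . -/
def SingleCrossing {X Y : Type*} [Preorder X] [Preorder Y] (h : X → Y → ℝ) : Prop :=
  ∀ ⦃x x' : X⦄ ⦃y y' : Y⦄, x < x' → y < y' →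
    (h x y ≤ h x' y → h x y' ≤ h x' y') ∧ (h x y < h x' y → h x y' < h x' y')

/-- The binary action space `{1, 2}` of the example game. -/
abbrev Act12 : Type := {a : ℕ // a = 1 ∨ a = 2}

/-- The type space `[0,1]` of the example game. -/
abbrev T01 : Type := ↥(Set.Icc (0:ℝ) 1)

/-- Lebesgue (= uniform) measure on `[0,1]`. -/
noncomputable def μ01 : Measure T01 := (volume : Measure ℝ).comap Subtype.val

/-- Player 1's payoff in the example game (first action is player 1's). -/
noncomputable def u1 (a1 a2 : Act12) (t1 t2 : ℝ) : ℝ :=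
  if a1.1 = 1 then
    (if a2.1 = 1 then 5/2 - 4/3 * t1 else 1/2 + 1/2 * t2)
  else
    (if a2.1 = 1 then 55/24 - t2/6 - 7/6 * t1 else 2 + t2 - 7/6 * t1)

/-- Player 2's payoff in the example game, depending only on the actions. -/
noncomputable def u2 (a1 a2 : Act12) : ℝ :=
  if a1.1 = 1 then (if a2.1 = 1 then -1 else 1)
  else (if a2.1 = 1 then 7 else -1)

/-- Player 1's interim payoff against a pure strategy of player 2 (types are independent
and uniform on `[0,1]`). -/
noncomputable def V1p (a : Act12) (t1 : T01) (s2 : T01 → Act12) : ℝ :=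
  ∫ t2 : T01, u1 a (s2 t2) (t1 : ℝ) (t2 : ℝ) ∂μ01

/-- Player 2's interim payoff against a pure strategy of player 1. -/
noncomputable def V2p (a : Act12) (t2 : T01) (s1 : T01 → Act12) : ℝ :=
  ∫ t1 : T01, u2 (s1 t1) a ∂μ01

/-! ### Auxiliary material -/

/-- Action `1`. -/
def act1 : Act12 := ⟨1, Or.inl rfl⟩

/-- Action `2`. -/
def act2 : Act12 := ⟨2, Or.inr rfl⟩

lemma act_eq (a : Act12) : a = act1 ∨ a = act2 := by
  rcases a.2 with h | h
  · exact Or.inl (Subtype.ext h)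
  · exact Or.inr (Subtype.ext h)

lemma integ_affine (p q a b : ℝ) :
    ∫ x in a..b, (p + q * x) = p * (b - a) + q * (b ^ 2 - a ^ 2) / 2 := by
  rw [intervalIntegral.integral_add intervalIntegrable_const
    ((intervalIntegral.intervalIntegrable_id).const_mul q), intervalIntegral.integral_const_mul,
    integral_id, intervalIntegral.integral_const]
  simp only [smul_eq_mul]; ring

lemma integ_affine' (f : ℝ → ℝ) (p q a b : ℝ) (h : ∀ x, f x = p + q * x) :
    ∫ x in a..b, f x = p * (b - a) + q * (b ^ 2 - a ^ 2) / 2 := by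
  rw [show f = fun x => p + q * x from funext h]
  exact integ_affine p q a b

lemma mu01_coe_eq_null (c : ℝ) : μ01 {t : T01 | (t : ℝ) = c} = 0 := by
  unfold μ01
  rw [Measure.comap_apply _ Subtype.val_injective
      (fun s hs => measurableSet_Icc.subtype_image hs) _
      (by exact measurable_subtype_coe (MeasurableSet.singleton c) :
        MeasurableSet {t : T01 | (t : ℝ) = c})]
  refine measure_mono_null ?_ (Real.volume_singleton (a := c))
  rintro x ⟨t, ht, rfl⟩
  exact ht

lemma cont_u1 (a b : Act12) (t1 : ℝ) : Continuous (fun x => u1 a b t1 x) := by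
  unfold u1
  rcases act_eq b with rfl | rfl <;> rcases act_eq a with rfl | rfl <;>
    simp only [act1, act2] <;> norm_num <;> fun_prop

/-- Closed form of player 1's interim payoffs against a monotone strategy. -/
lemma V1p_closed (s2 : T01 → Act12) (hm : Monotone s2) :
    ∃ c : ℝ, 0 ≤ c ∧ c ≤ 1 ∧
      (∀ t1 : T01, V1p act1 t1 s2 = 3/4 + 2*c - 4/3*(t1:ℝ)*c - c^2/4) ∧
      (∀ t1 : T01, V1p act2 t1 s2 = 5/2 - 7/6*(t1:ℝ) + 7/24*c - 7/12*c^2) := by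
  classical
  set B : Set ℝ := {x | ∃ t : T01, s2 t = act2 ∧ (t : ℝ) = x} with hB
  set c : ℝ := sInf (B ∪ {1}) with hc
  have hBsub : ∀ x ∈ B ∪ {1}, 0 ≤ x ∧ x ≤ 1 := by
    rintro x (⟨t, -, rfl⟩ | rfl)
    · exact ⟨t.2.1, t.2.2⟩
    · norm_num
  have hbdd : BddBelow (B ∪ {1}) := ⟨0, fun x hx => (hBsub x hx).1⟩
  have hne : (B ∪ {1}).Nonempty := ⟨1, Or.inr rfl⟩
  have hc0 : 0 ≤ c := le_csInf hne fun x hx => (hBsub x hx).1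
  have hc1 : c ≤ 1 := csInf_le hbdd (Or.inr rfl)
  have hlt : ∀ t : T01, (t : ℝ) < c → s2 t = act1 := by
    intro t ht
    rcases act_eq (s2 t) with h | h
    · exact h
    · exact absurd (csInf_le hbdd (Or.inl ⟨t, h, rfl⟩)) (not_le.mpr ht)
  have hgt : ∀ t : T01, c < (t : ℝ) → s2 t = act2 := by
    intro t ht
    obtain ⟨x, hx, hxt⟩ := exists_lt_of_csInf_lt hne ht
    rcases hx with hxB | rfl
    · obtain ⟨t', ht', rfl⟩ := hxB
      have hle : t' ≤ t := le_of_lt (Subtype.coe_lt_coe.mp hxt)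
      have h2 : (2 : ℕ) ≤ (s2 t).1 := by
        have := hm hle
        rw [ht'] at this
        exact this
      rcases act_eq (s2 t) with h | h
      · rw [h] at h2; simp [act1] at h2
      · exact h
    · exact absurd hxt (not_lt.mpr t.2.2)
  have key : ∀ (a : Act12) (t1 : T01), V1p a t1 s2 =
      (∫ x in (0:ℝ)..1, u1 a act2 (t1:ℝ) x)
        + ∫ x in (0:ℝ)..c, (u1 a act1 (t1:ℝ) x - u1 a act2 (t1:ℝ) x) := by
    intro a t1
    set d : ℝ → ℝ := fun x => u1 a act1 (t1:ℝ) x - u1 a act2 (t1:ℝ) x with hd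
    set g : ℝ → ℝ := fun x => u1 a act2 (t1:ℝ) x + Set.indicator (Set.Iio c) d x with hg
    have hneq : ∀ᵐ t : T01 ∂μ01, (t : ℝ) ≠ c := by
      rw [ae_iff]
      convert mu01_coe_eq_null c using 2
      simp
    have hae : ∀ᵐ t ∂μ01, u1 a (s2 t) (t1:ℝ) (t:ℝ) = g (t:ℝ) := by
      filter_upwards [hneq] with t htc
      rcases lt_or_gt_of_ne htc with h | h
      · rw [hlt t h, hg]
        simp only [Set.indicator_of_mem (show (t:ℝ) ∈ Set.Iio c from h), hd]
        ring
      · rw [hgt t h, hg]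
        simp only [Set.indicator_of_notMem (show (t:ℝ) ∉ Set.Iio c by
          simp only [Set.mem_Iio, not_lt]; exact h.le), hd]
        ring
    have step1 : V1p a t1 s2 = ∫ t : T01, g (t:ℝ) ∂μ01 := integral_congr_ae hae
    have step2 : ∫ t : T01, g (t:ℝ) ∂μ01 = ∫ x in Set.Icc (0:ℝ) 1, g x := by
      unfold μ01
      exact integral_subtype_comap measurableSet_Icc g
    have hint2 : IntegrableOn (fun x => u1 a act2 (t1:ℝ) x) (Set.Icc (0:ℝ) 1) volume :=
      (cont_u1 a act2 (t1:ℝ)).integrableOn_Icc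
    have hintd : Integrable (Set.indicator (Set.Iio c) d)
        (volume.restrict (Set.Icc (0:ℝ) 1)) :=
      (((cont_u1 a act1 (t1:ℝ)).sub (cont_u1 a act2 (t1:ℝ))).integrableOn_Icc).indicator
        measurableSet_Iio
    have step3 : ∫ x in Set.Icc (0:ℝ) 1, g x
        = (∫ x in Set.Icc (0:ℝ) 1, u1 a act2 (t1:ℝ) x)
          + ∫ x in Set.Icc (0:ℝ) 1, Set.indicator (Set.Iio c) d x :=
      integral_add hint2 hintd
    have hset : Set.Icc (0:ℝ) 1 ∩ Set.Iio c = Set.Ico 0 c := by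
      ext x
      constructor
      · rintro ⟨⟨h0, -⟩, hx⟩; exact ⟨h0, hx⟩
      · rintro ⟨h0, hx⟩; exact ⟨⟨h0, le_trans hx.le hc1⟩, hx⟩
    have step4 : ∫ x in Set.Icc (0:ℝ) 1, Set.indicator (Set.Iio c) d x
        = ∫ x in (0:ℝ)..c, d x := by
      rw [setIntegral_indicator measurableSet_Iio, hset,
        integral_Ico_eq_integral_Ioo, ← integral_Ioc_eq_integral_Ioo,
        intervalIntegral.integral_of_le hc0]
    have step5 : ∫ x in Set.Icc (0:ℝ) 1, u1 a act2 (t1:ℝ) x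
        = ∫ x in (0:ℝ)..1, u1 a act2 (t1:ℝ) x := by
      rw [intervalIntegral.integral_of_le (by norm_num : (0:ℝ) ≤ 1), integral_Icc_eq_integral_Ioc]
    rw [step1, step2, step3, step4, step5]
  refine ⟨c, hc0, hc1, ?_, ?_⟩
  · intro t1
    rw [key act1 t1,
      integ_affine' _ (1/2) (1/2) 0 1 (fun x => by simp [u1, act1, act2]; try ring),
      integ_affine' _ (2 - 4/3*(t1:ℝ)) (-(1/2)) 0 c (fun x => by simp [u1, act1, act2]; try ring)]
    ring
  · intro t1
    rw [key act2 t1,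
      integ_affine' _ (2 - 7/6*(t1:ℝ)) 1 0 1 (fun x => by simp [u1, act1, act2]; try ring),
      integ_affine' _ (7/24) (-(7/6)) 0 c (fun x => by simp [u1, act1, act2]; try ring)]
    ring

/-- **Claim.**  In the example game, each player's interim payoff satisfies the single
crossing condition in (own action, own type) against any monotone strategy of the opponent. -/
theorem example1_singleCrossing :
    (∀ s2 : T01 → Act12, Measurable s2 → Monotone s2 →
      SingleCrossing fun (a : Act12) (t1 : T01) => V1p a t1 s2) ∧
    (∀ s1 : T01 → Act12, Measurable s1 → Monotone s1 →
      SingleCrossing fun (a : Act12) (t2 : T01) => V2p a t2 s1) := by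
  constructor
  · intro s2 _ hmono
    obtain ⟨c, hc0, hc1, hv1, hv2⟩ := V1p_closed s2 hmono
    intro x x' y y' hx hy
    have hxn : x.1 < x'.1 := hx
    have hx1 : x = act1 := by
      rcases act_eq x with rfl | rfl
      · rfl
      · rcases act_eq x' with rfl | rfl <;> simp [act1, act2] at hxn
    have hx2 : x' = act2 := by
      rcases act_eq x' with rfl | rfl
      · rcases act_eq x with rfl | rfl <;> simp [act1, act2] at hxn
      · rfl
    subst hx1; subst hx2
    simp only
    rw [hv1 y, hv2 y, hv1 y', hv2 y']
    have htt : (y:ℝ) < (y':ℝ) := hy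
    have h0 : (0:ℝ) ≤ (y:ℝ) := y.2.1
    have h1 : (y':ℝ) ≤ 1 := y'.2.2
    set t := (y:ℝ); set t' := (y':ℝ)
    constructor <;> intro h <;>
    · rcases le_or_gt (7:ℝ) (8*c) with hcase | hcase
      · nlinarith [mul_nonneg (sub_nonneg.2 htt.le) (by linarith : (0:ℝ) ≤ 8*c - 7)]
      · nlinarith [mul_nonneg (by linarith : (0:ℝ) ≤ 7 - 8*c) (by linarith : (0:ℝ) ≤ 1 - t'),
          mul_pos (by linarith : (0:ℝ) < 7/8 - c) (by linarith : (0:ℝ) < c + 2)]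
  · intro s1 _ _
    intro x x' y y' _ _
    exact ⟨fun h => h, fun h => h⟩

end

end MonotonePerfection
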